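/- Let E = E(n,𝒟) be a fractal cube whose 1st approximation E₁ contains an island U = ⋃_{j∈J} φ_j([0,1]^d) (J ⊆ {1,…,N}), and let P be the set of points of E admitting a coding in which letters from J occur infinitely often. Then E \ P is contained in ⋃_{σ ∈ Σ*} φ_σ(E'), where E' is the fractal cube with digit set 𝒟' = 𝒟 \ {d_j : j ∈ J}; consequently dim_H (E \ P) ≤ log(#𝒟')/log n < dim_H E. -/

import Mathlib

open Set Metric MeasureTheory
open scoped ENNReal NNReal

section FC
variable {d N : ℕ}

/-- Composition of the maps along a word. -/
def fcPhi (φ : Fin N → (Fin d → ℝ) → (Fin d → ℝ)) (w : List (Fin N)) :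
    (Fin d → ℝ) → (Fin d → ℝ) := w.foldr (fun j f => φ j ∘ f) id

@[simp] lemma fcPhi_nil (φ : Fin N → (Fin d → ℝ) → (Fin d → ℝ)) : fcPhi φ [] = id := rfl

lemma fcPhi_cons (φ : Fin N → (Fin d → ℝ) → (Fin d → ℝ)) (j : Fin N) (w : List (Fin N)) :
    fcPhi φ (j :: w) = φ j ∘ fcPhi φ w := rfl

lemma fcPhi_append (φ : Fin N → (Fin d → ℝ) → (Fin d → ℝ)) (w w' : List (Fin N)) :
    fcPhi φ (w ++ w') = fcPhi φ w ∘ fcPhi φ w' := by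
  induction w with
  | nil => simp
  | cons j w ih => simp [List.cons_append, fcPhi_cons, ih, Function.comp_assoc]

variable {n : ℕ} {D : Fin N → (Fin d → ℝ)} {φ : Fin N → (Fin d → ℝ) → (Fin d → ℝ)}

lemma dist_phi (hn : 2 ≤ n) (hφ : ∀ j x, φ j x = (n : ℝ)⁻¹ • (x + D j)) (j : Fin N)
    (a b : Fin d → ℝ) : dist (φ j a) (φ j b) = (n : ℝ)⁻¹ * dist a b := by
  rw [hφ, hφ, dist_smul₀, dist_add_right, Real.norm_eq_abs, abs_of_nonneg (by positivity)]

lemma dist_fcPhi (hn : 2 ≤ n) (hφ : ∀ j x, φ j x = (n : ℝ)⁻¹ • (x + D j)) (w : List (Fin N))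
    (a b : Fin d → ℝ) :
    dist (fcPhi φ w a) (fcPhi φ w b) = ((n : ℝ)⁻¹) ^ w.length * dist a b := by
  induction w with
  | nil => simp
  | cons j w ih =>
    simp only [fcPhi_cons, Function.comp_apply, dist_phi hn hφ, ih, List.length_cons]
    ring

lemma lipschitz_fcPhi (hn : 2 ≤ n) (hφ : ∀ j x, φ j x = (n : ℝ)⁻¹ • (x + D j))
    (w : List (Fin N)) : LipschitzWith 1 (fcPhi φ w) := by
  have h1 : ((n : ℝ)⁻¹) ^ w.length ≤ 1 := by
    apply pow_le_one₀ (by positivity)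
    rw [inv_le_one_iff₀]
    right; exact_mod_cast Nat.one_le_of_lt hn
  apply LipschitzWith.of_dist_le_mul
  intro a b
  rw [dist_fcPhi hn hφ, NNReal.coe_one, one_mul]
  exact mul_le_of_le_one_left dist_nonneg h1

end FC

section Coding
variable {d N n : ℕ} {D : Fin N → (Fin d → ℝ)} {φ : Fin N → (Fin d → ℝ) → (Fin d → ℝ)}
variable {E : Set (Fin d → ℝ)}

lemma exists_coding (hE : E = ⋃ j, φ j '' E) {x : Fin d → ℝ} (hx : x ∈ E) :
    ∃ σ : ℕ → Fin N, ∀ k : ℕ,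
      x ∈ fcPhi φ (List.ofFn (fun i : Fin k => σ i)) '' E := by
  have hstep : ∀ y : {z // z ∈ E}, ∃ p : Fin N × {z // z ∈ E}, (y : Fin d → ℝ) = φ p.1 p.2 := by
    rintro ⟨y, hy⟩
    rw [hE] at hy
    obtain ⟨j, z, hz, hzy⟩ := mem_iUnion.1 hy
    exact ⟨⟨j, ⟨z, hz⟩⟩, hzy.symm⟩
  choose next hnext using hstep
  let pts : ℕ → {z // z ∈ E} := fun k => Nat.rec ⟨x, hx⟩ (fun _ p => (next p).2) k
  have key : ∀ k : ℕ, x = fcPhi φ (List.ofFn (fun i : Fin k => (next (pts i)).1)) ((pts k).val) := by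
    intro k
    induction k with
    | zero => rfl
    | succ k ih =>
      have hrec : ((pts k).val) = φ (next (pts k)).1 ((next (pts k)).2).val := hnext (pts k)
      have hlist : (List.ofFn (fun i : Fin (k+1) => (next (pts i)).1))
          = (List.ofFn (fun i : Fin k => (next (pts i)).1)) ++ [(next (pts k)).1] := by
        rw [List.ofFn_succ']
        simp [List.concat_eq_append]
      rw [hlist, fcPhi_append, Function.comp_apply]
      have hone : fcPhi φ [(next (pts k)).1] ((pts (k+1)).val) = (pts k).val := by
        have hp : (pts (k+1)).val = ((next (pts k)).2).val := rfl
        rw [show fcPhi φ [(next (pts k)).1] = φ (next (pts k)).1 ∘ id from rfl]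
        rw [Function.comp_apply, id_eq, hp, ← hrec]
      rw [hone]
      exact ih
  refine ⟨fun k => (next (pts k)).1, fun k => ?_⟩
  exact (key k) ▸ ⟨(pts k).val, (pts k).2, rfl⟩

lemma dist_le_of_mem_fcPhi (hn : 2 ≤ n) (hφ : ∀ j x, φ j x = (n : ℝ)⁻¹ • (x + D j))
    {S : Set (Fin d → ℝ)} (hS : Bornology.IsBounded S) (w : List (Fin N))
    {x y : Fin d → ℝ} (hx : x ∈ fcPhi φ w '' S) (hy : y ∈ fcPhi φ w '' S) :
    dist x y ≤ ((n : ℝ)⁻¹) ^ w.length * diam S := by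
  obtain ⟨a, ha, rfl⟩ := hx
  obtain ⟨b, hb, rfl⟩ := hy
  rw [dist_fcPhi hn hφ]
  exact mul_le_mul_of_nonneg_left (dist_le_diam_of_mem hS ha hb) (by positivity)

lemma eq_of_mem_all (hn : 2 ≤ n) (hφ : ∀ j x, φ j x = (n : ℝ)⁻¹ • (x + D j))
    {S : Set (Fin d → ℝ)} (hS : Bornology.IsBounded S) {w : ℕ → List (Fin N)}
    (hw : ∀ k, k ≤ (w k).length) {x y : Fin d → ℝ}
    (hx : ∀ k, x ∈ fcPhi φ (w k) '' S) (hy : ∀ k, y ∈ fcPhi φ (w k) '' S) : x = y := by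
  have hn1 : (1 : ℝ) < (n : ℝ) := by exact_mod_cast hn.trans_lt' one_lt_two
  have hinv : (n : ℝ)⁻¹ < 1 := inv_lt_one_of_one_lt₀ hn1
  have hinv0 : (0 : ℝ) ≤ (n : ℝ)⁻¹ := by positivity
  have hdist : ∀ k : ℕ, dist x y ≤ ((n : ℝ)⁻¹) ^ k * diam S := by
    intro k
    calc dist x y ≤ ((n : ℝ)⁻¹) ^ (w k).length * diam S :=
          dist_le_of_mem_fcPhi hn hφ hS (w k) (hx k) (hy k)
      _ ≤ ((n : ℝ)⁻¹) ^ k * diam S := by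
          apply mul_le_mul_of_nonneg_right _ diam_nonneg
          exact pow_le_pow_of_le_one hinv0 hinv.le (hw k)
  have htend : Filter.Tendsto (fun k : ℕ => ((n : ℝ)⁻¹) ^ k * diam S) Filter.atTop
      (nhds (0 * diam S)) :=
    ((tendsto_pow_atTop_nhds_zero_of_lt_one hinv0 hinv).mul_const _)
  rw [zero_mul] at htend
  have : dist x y ≤ 0 := ge_of_tendsto' htend hdist
  exact dist_le_zero.1 this

end Coding

section Part1
variable {d N n : ℕ} {D : Fin N → (Fin d → ℝ)} {φ : Fin N → (Fin d → ℝ) → (Fin d → ℝ)}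
variable {E E' : Set (Fin d → ℝ)} {J : Finset (Fin N)}

lemma sub_invariance (hE' : E' = ⋃ j ∈ Jᶜ, φ j '' E') {j : Fin N} (hj : j ∉ J) :
    φ j '' E' ⊆ E' := by
  conv_rhs => rw [hE']
  exact subset_iUnion₂ (s := fun j _ => φ j '' E') j (Finset.mem_compl.2 hj)

lemma fcPhi_ofFn_succ (φ : Fin N → (Fin d → ℝ) → (Fin d → ℝ)) (σ : ℕ → Fin N) (k : ℕ) :
    fcPhi φ (List.ofFn (fun i : Fin (k+1) => σ i))
      = fcPhi φ (List.ofFn (fun i : Fin k => σ i)) ∘ φ (σ k) := by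
  have : (List.ofFn (fun i : Fin (k+1) => σ i))
      = (List.ofFn (fun i : Fin k => σ i)) ++ [σ k] := by
    rw [List.ofFn_succ']
    simp [List.concat_eq_append]
  rw [this, fcPhi_append]
  rfl

lemma part1 (hn : 2 ≤ n) (hφ : ∀ j x, φ j x = (n : ℝ)⁻¹ • (x + D j))
    (hEc : IsCompact E) (hE : E = ⋃ j, φ j '' E)
    (P : Set (Fin d → ℝ))
    (hP : P = {x ∈ E | ∃ σ : ℕ → Fin N,
      (⋂ k : ℕ, ((List.ofFn (fun i : Fin k => σ i)).foldr
          (fun j f => φ j ∘ f) id) '' E) = {x} ∧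
      ∀ m : ℕ, ∃ k ≥ m, σ k ∈ J})
    (hE'ne : E'.Nonempty) (hE'c : IsCompact E')
    (hE' : E' = ⋃ j ∈ Jᶜ, φ j '' E') :
    E \ P ⊆ (⋃ σ : List (Fin N), (σ.foldr (fun j f => φ j ∘ f) id) '' E') := by
  rintro x ⟨hxE, hxP⟩
  obtain ⟨σ, hσ⟩ := exists_coding hE hxE
  have hEb : Bornology.IsBounded E := hEc.isBounded
  have hsing : (⋂ k : ℕ, fcPhi φ (List.ofFn (fun i : Fin k => σ i)) '' E) = {x} := by
    apply Set.eq_singleton_iff_unique_mem.2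
    refine ⟨mem_iInter.2 hσ, fun y hy => ?_⟩
    exact eq_of_mem_all hn hφ hEb
      (w := fun k => List.ofFn (fun i : Fin k => σ i))
      (fun k => by simp) (fun k => mem_iInter.1 hy k) hσ
  have hnotinf : ¬ ∀ m : ℕ, ∃ k ≥ m, σ k ∈ J := by
    intro hcon
    exact hxP (by rw [hP]; exact ⟨hxE, σ, hsing, hcon⟩)
  push_neg at hnotinf
  obtain ⟨m, hm⟩ := hnotinf
  set τ : ℕ → Fin N := fun k => σ (m + k) with hτ
  set K : ℕ → Set (Fin d → ℝ) := fun k => fcPhi φ (List.ofFn (fun i : Fin k => τ i)) '' E'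
    with hK
  have hKanti : ∀ k, K (k+1) ⊆ K k := by
    intro k
    have : K (k+1) = fcPhi φ (List.ofFn (fun i : Fin k => τ i)) '' (φ (τ k) '' E') := by
      rw [hK]; simp only [fcPhi_ofFn_succ, Set.image_comp]
    rw [this]
    apply Set.image_mono
    exact sub_invariance hE' (hm (m + k) (Nat.le_add_right _ _))
  have hKcont : ∀ w : List (Fin N), Continuous (fcPhi φ w) :=
    fun w => (lipschitz_fcPhi hn hφ w).continuous
  have hKne : ∀ k, (K k).Nonempty := fun k => hE'ne.image _
  have hKcomp : ∀ k, IsCompact (K k) := fun k => hE'c.image (hKcont _)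
  obtain ⟨y, hy⟩ := IsCompact.nonempty_iInter_of_sequence_nonempty_isCompact_isClosed
    K hKanti hKne (hKcomp 0) (fun k => (hKcomp k).isClosed)
  have hyE' : y ∈ E' := by
    have := mem_iInter.1 hy 0
    simpa [hK] using this
  have hEE'b : Bornology.IsBounded (E ∪ E') := hEb.union hE'c.isBounded
  have hsplit : ∀ k : ℕ, (List.ofFn (fun i : Fin (m + k) => σ i))
      = (List.ofFn (fun i : Fin m => σ i)) ++ (List.ofFn (fun i : Fin k => τ i)) := by
    intro k
    rw [List.ofFn_add]
    congr 1
  have hxy : x = fcPhi φ (List.ofFn (fun i : Fin m => σ i)) y := by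
    apply eq_of_mem_all hn hφ hEE'b (w := fun k => List.ofFn (fun i : Fin (m + k) => σ i))
      (fun k => by simp)
    · exact fun k => Set.image_mono Set.subset_union_left (hσ (m + k))
    · intro k
      have hyk : y ∈ K k := mem_iInter.1 hy k
      rw [hsplit k, fcPhi_append]
      have : fcPhi φ (List.ofFn (fun i : Fin m => σ i)) y
          ∈ (fcPhi φ (List.ofFn (fun i : Fin m => σ i)) ∘
            fcPhi φ (List.ofFn (fun i : Fin k => τ i))) '' E' := by
        rw [Set.image_comp]
        exact ⟨_, hyk, rfl⟩
      exact Set.image_mono Set.subset_union_right this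
  exact mem_iUnion.2 ⟨List.ofFn (fun i : Fin m => σ i), ⟨y, hyE', hxy.symm⟩⟩

end Part1

section Upper
variable {d N n : ℕ} {D : Fin N → (Fin d → ℝ)} {φ : Fin N → (Fin d → ℝ) → (Fin d → ℝ)}
variable {S : Set (Fin d → ℝ)} {F : Finset (Fin N)}

lemma cover_iterate (hS' : S = ⋃ j ∈ F, φ j '' S) (k : ℕ) :
    S ⊆ ⋃ w : Fin k → {j // j ∈ F}, fcPhi φ (List.ofFn fun i => (w i).1) '' S := by
  induction k with
  | zero =>
    intro x hx
    exact mem_iUnion.2 ⟨fun i => i.elim0, by simpa using hx⟩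
  | succ k ih =>
    intro x hx
    obtain ⟨w, y, hyS, hxy⟩ := mem_iUnion.1 (ih hx)
    rw [hS'] at hyS
    obtain ⟨j, hjF, z, hzS, hzy⟩ := mem_iUnion₂.1 hyS
    refine mem_iUnion.2 ⟨Fin.snoc w ⟨j, hjF⟩, ?_⟩
    have hlist : (List.ofFn fun i : Fin (k+1) => ((Fin.snoc w ⟨j, hjF⟩ : Fin (k+1) →
        {j // j ∈ F}) i).1) = (List.ofFn fun i : Fin k => (w i).1) ++ [j] := by
      rw [List.ofFn_succ']
      simp [List.concat_eq_append]
    rw [hlist, fcPhi_append]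
    refine ⟨z, hzS, ?_⟩
    have : fcPhi φ [j] z = φ j z := rfl
    rw [Function.comp_apply, this, hzy, hxy]

lemma hausdorff_zero_of_gt (hn : 2 ≤ n) (hφ : ∀ j x, φ j x = (n : ℝ)⁻¹ • (x + D j))
    (hSc : IsCompact S) (hS' : S = ⋃ j ∈ F, φ j '' S) (hF : 0 < F.card)
    {s : ℝ} (hs : Real.log F.card / Real.log n < s) :
    μH[s] S = 0 := by
  have hn1 : (1 : ℝ) < (n : ℝ) := by exact_mod_cast hn.trans_lt' one_lt_two
  have hlogn : 0 < Real.log n := Real.log_pos hn1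
  have hs0 : 0 ≤ s := le_of_lt (lt_of_le_of_lt (div_nonneg
    (Real.log_nonneg (by exact_mod_cast hF)) hlogn.le) hs)
  have hcard : (F.card : ℝ) < (n : ℝ) ^ s := by
    rw [← Real.exp_log (x := (F.card : ℝ)) (by exact_mod_cast hF),
      ← Real.exp_log (Real.rpow_pos_of_pos (by positivity) s), Real.exp_lt_exp,
      Real.log_rpow (by positivity)]
    exact (div_lt_iff₀ hlogn).1 hs
  set x := diam S with hx
  have hx0 : 0 ≤ x := diam_nonneg
  set q : ℝ := (F.card : ℝ) / (n : ℝ) ^ s with hq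
  have hq0 : 0 ≤ q := div_nonneg (Nat.cast_nonneg _) (Real.rpow_nonneg (Nat.cast_nonneg _) s)
  have hq1 : q < 1 := (div_lt_one (Real.rpow_pos_of_pos (by positivity) s)).2 hcard
  -- the covering estimate
  have key : μH[s] S ≤ Filter.liminf (fun k : ℕ =>
      ENNReal.ofReal (x ^ s * q ^ k)) Filter.atTop := by
    have hbound := MeasureTheory.Measure.hausdorffMeasure_le_liminf_sum (X := Fin d → ℝ) s S
      (l := Filter.atTop)
      (ι := fun k : ℕ => Fin k → {j // j ∈ F})
      (fun k => ENNReal.ofReal (((n : ℝ)⁻¹) ^ k * x))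
      (by
        rw [show (0 : ℝ≥0∞) = ENNReal.ofReal 0 by simp]
        apply ENNReal.tendsto_ofReal
        have := (tendsto_pow_atTop_nhds_zero_of_lt_one (by positivity)
          (inv_lt_one_of_one_lt₀ hn1)).mul_const x
        simpa using this)
      (fun k w => fcPhi φ (List.ofFn fun i => (w i).1) '' S)
      (by
        filter_upwards with k
        intro w
        apply EMetric.diam_le
        intro a ha b hb
        rw [edist_dist]
        apply ENNReal.ofReal_le_ofReal
        have := dist_le_of_mem_fcPhi hn hφ hSc.isBounded
          (List.ofFn fun i => (w i).1) ha hb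
        simpa using this)
      (by filter_upwards with k; exact cover_iterate hS' k)
    refine le_trans hbound (Filter.liminf_le_liminf ?_)
    filter_upwards with k
    calc ∑ w : Fin k → {j // j ∈ F},
          EMetric.diam (fcPhi φ (List.ofFn fun i => (w i).1) '' S) ^ s
        ≤ ∑ _w : Fin k → {j // j ∈ F},
          (ENNReal.ofReal (((n : ℝ)⁻¹) ^ k * x)) ^ s := by
          apply Finset.sum_le_sum
          intro w _
          apply ENNReal.rpow_le_rpow _ hs0
          apply EMetric.diam_le
          intro a ha b hb
          rw [edist_dist]
          apply ENNReal.ofReal_le_ofReal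
          have := dist_le_of_mem_fcPhi hn hφ hSc.isBounded
            (List.ofFn fun i => (w i).1) ha hb
          simpa using this
      _ = (F.card ^ k : ℕ) * (ENNReal.ofReal (((n : ℝ)⁻¹) ^ k * x)) ^ s := by
          rw [Finset.sum_const, Finset.card_univ]
          simp [Fintype.card_fun, nsmul_eq_mul]
      _ = ENNReal.ofReal (x ^ s * q ^ k) := by
          rw [ENNReal.ofReal_rpow_of_nonneg (by positivity) hs0,
            ← ENNReal.ofReal_natCast, ← ENNReal.ofReal_mul (Nat.cast_nonneg _)]
          congr 1
          rw [Real.mul_rpow (by positivity) hx0, ← Real.rpow_natCast ((n : ℝ)⁻¹) k,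
            ← Real.rpow_mul (by positivity), mul_comm (k : ℝ) s,
            Real.rpow_mul (by positivity), Real.rpow_natCast]
          push_cast
          rw [Real.inv_rpow (by positivity)]
          rw [hq, div_eq_mul_inv]
          ring
  have htend : Filter.Tendsto (fun k : ℕ => ENNReal.ofReal (x ^ s * q ^ k))
      Filter.atTop (nhds 0) := by
    rw [show (0 : ℝ≥0∞) = ENNReal.ofReal 0 by simp]
    apply ENNReal.tendsto_ofReal
    have := (tendsto_pow_atTop_nhds_zero_of_lt_one hq0 hq1).const_mul (x ^ s)
    simpa using this
  have : μH[s] S ≤ 0 := by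
    rw [← htend.liminf_eq]
    exact key
  exact le_antisymm this zero_le

lemma dimH_subattractor_le (hn : 2 ≤ n) (hφ : ∀ j x, φ j x = (n : ℝ)⁻¹ • (x + D j))
    (hSc : IsCompact S) (hS' : S = ⋃ j ∈ F, φ j '' S) (hF : 0 < F.card) :
    dimH S ≤ ENNReal.ofReal (Real.log F.card / Real.log n) := by
  have hn1 : (1 : ℝ) < (n : ℝ) := by exact_mod_cast hn.trans_lt' one_lt_two
  have hlogn : 0 < Real.log n := Real.log_pos hn1
  have ht0 : 0 ≤ Real.log F.card / Real.log n :=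
    div_nonneg (Real.log_nonneg (by exact_mod_cast hF)) hlogn.le
  apply dimH_le
  intro d' hd'
  by_contra hcon
  push_neg at hcon
  have : Real.log F.card / Real.log n < (d' : ℝ) := by
    have := hcon
    rw [← ENNReal.ofReal_coe_nnreal] at this
    exact (ENNReal.ofReal_lt_ofReal_iff_of_nonneg ht0).1 this
  have := hausdorff_zero_of_gt hn hφ hSc hS' hF this
  rw [this] at hd'
  exact ENNReal.zero_ne_top hd'

end Upper

section Digits
variable {N : ℕ} {t t' : ℝ}

/-- The `k`-th digit of `t` in base `N`. -/
noncomputable def dgt (N k : ℕ) (t : ℝ) : ℕ := (⌊t * (N:ℝ)^(k+1)⌋ % (N:ℤ)).toNat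

lemma dgt_lt (hN : 0 < N) (k : ℕ) (t : ℝ) : dgt N k t < N := by
  have h2 : ⌊t * (N:ℝ)^(k+1)⌋ % (N:ℤ) < N :=
    Int.emod_lt_of_pos _ (by exact_mod_cast hN)
  have h1 : 0 ≤ ⌊t * (N:ℝ)^(k+1)⌋ % (N:ℤ) := Int.emod_nonneg _ (by exact_mod_cast hN.ne')
  unfold dgt
  omega

lemma dgt_cast (hN : 0 < N) (k : ℕ) (t : ℝ) :
    (dgt N k t : ℤ) = ⌊t * (N:ℝ)^(k+1)⌋ % (N:ℤ) := by
  have h1 : 0 ≤ ⌊t * (N:ℝ)^(k+1)⌋ % (N:ℤ) := Int.emod_nonneg _ (by exact_mod_cast hN.ne')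
  unfold dgt
  omega

lemma floor_succ (hN : 0 < N) (k : ℕ) (t : ℝ) :
    ⌊t * (N:ℝ)^(k+1)⌋ = N * ⌊t * (N:ℝ)^k⌋ + dgt N k t := by
  have hNR : (0:ℝ) < (N:ℝ) := by exact_mod_cast hN
  have hbr : ((N:ℝ) * ⌊t * (N:ℝ)^k⌋ : ℝ) ≤ t * (N:ℝ)^(k+1) := by
    have := Int.floor_le (t * (N:ℝ)^k)
    calc ((N:ℝ) * ⌊t * (N:ℝ)^k⌋ : ℝ) ≤ (N:ℝ) * (t * (N:ℝ)^k) :=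
          mul_le_mul_of_nonneg_left this hNR.le
      _ = t * (N:ℝ)^(k+1) := by ring
  have hbr2 : t * (N:ℝ)^(k+1) < (N:ℝ) * ⌊t * (N:ℝ)^k⌋ + N := by
    have := Int.lt_floor_add_one (t * (N:ℝ)^k)
    calc t * (N:ℝ)^(k+1) = (N:ℝ) * (t * (N:ℝ)^k) := by ring
      _ < (N:ℝ) * (⌊t * (N:ℝ)^k⌋ + 1) := mul_lt_mul_of_pos_left this hNR
      _ = (N:ℝ) * ⌊t * (N:ℝ)^k⌋ + N := by ring
  have hlow : (N:ℤ) * ⌊t * (N:ℝ)^k⌋ ≤ ⌊t * (N:ℝ)^(k+1)⌋ := by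
    apply Int.le_floor.2
    exact_mod_cast hbr
  have hhigh : ⌊t * (N:ℝ)^(k+1)⌋ < (N:ℤ) * ⌊t * (N:ℝ)^k⌋ + N := by
    apply Int.floor_lt.2
    exact_mod_cast hbr2
  have hmod : ⌊t * (N:ℝ)^(k+1)⌋ % (N:ℤ)
      = ⌊t * (N:ℝ)^(k+1)⌋ - (N:ℤ) * ⌊t * (N:ℝ)^k⌋ := by
    conv_lhs => rw [show (⌊t * (N:ℝ)^(k+1)⌋ : ℤ)
      = (⌊t * (N:ℝ)^(k+1)⌋ - (N:ℤ) * ⌊t * (N:ℝ)^k⌋) + (N:ℤ) * ⌊t * (N:ℝ)^k⌋ from by ring]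
    rw [Int.add_mul_emod_self_left]
    exact Int.emod_eq_of_lt (by linarith) (by linarith)
  rw [dgt_cast hN k t, hmod]
  ring

lemma floor_eq_of_dgt_eq (hN : 0 < N) (ht : t ∈ Ico (0:ℝ) 1) (ht' : t' ∈ Ico (0:ℝ) 1)
    {k : ℕ} (h : ∀ i, i < k → dgt N i t = dgt N i t') :
    ⌊t * (N:ℝ)^k⌋ = ⌊t' * (N:ℝ)^k⌋ := by
  induction k with
  | zero =>
    simp only [pow_zero, mul_one]
    rw [Int.floor_eq_zero_iff.2 (by exact ⟨ht.1, ht.2⟩),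
      Int.floor_eq_zero_iff.2 (by exact ⟨ht'.1, ht'.2⟩)]
  | succ k ih =>
    have hk := ih (fun i hi => h i (Nat.lt_succ_of_lt hi))
    have h1 := floor_succ (t := t) hN k
    have h2 := floor_succ (t := t') hN k
    rw [h1, h2, hk, h k (Nat.lt_succ_self k)]

/-- The set of `t ∈ [0,1)` with prescribed first `k` digits. -/
def cylSet (N k : ℕ) (w : ℕ → ℕ) : Set ℝ :=
  {t | t ∈ Ico (0:ℝ) 1 ∧ ∀ i, i < k → dgt N i t = w i}

lemma cylSet_volume (hN : 0 < N) (k : ℕ) (w : ℕ → ℕ) :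
    MeasureTheory.volume (cylSet N k w) ≤ ENNReal.ofReal (((N:ℝ)^k)⁻¹) := by
  rcases Set.eq_empty_or_nonempty (cylSet N k w) with he | ⟨t₀, ht₀⟩
  · rw [he]; simp
  have hNR : (0:ℝ) < (N:ℝ)^k := by positivity
  set c : ℤ := ⌊t₀ * (N:ℝ)^k⌋
  have hsub : cylSet N k w ⊆ Ico ((c:ℝ) / (N:ℝ)^k) (((c:ℝ)+1) / (N:ℝ)^k) := by
    intro t ht
    have hc : ⌊t * (N:ℝ)^k⌋ = c :=
      floor_eq_of_dgt_eq hN ht.1 ht₀.1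
        (fun i hi => (ht.2 i hi).trans (ht₀.2 i hi).symm)
    have h1 : (c:ℝ) ≤ t * (N:ℝ)^k := by rw [← hc]; exact Int.floor_le _
    have h2 : t * (N:ℝ)^k < (c:ℝ) + 1 := by rw [← hc]; exact Int.lt_floor_add_one _
    constructor
    · rw [div_le_iff₀ hNR]; linarith
    · rw [lt_div_iff₀ hNR]; linarith
  calc MeasureTheory.volume (cylSet N k w)
      ≤ MeasureTheory.volume (Ico ((c:ℝ) / (N:ℝ)^k) (((c:ℝ)+1) / (N:ℝ)^k)) :=
        MeasureTheory.measure_mono hsub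
    _ = ENNReal.ofReal (((c:ℝ)+1) / (N:ℝ)^k - (c:ℝ) / (N:ℝ)^k) := by
        rw [Real.volume_Ico]
    _ = ENNReal.ofReal (((N:ℝ)^k)⁻¹) := by
        congr 1
        field_simp
        ring

lemma dgt_measurable (N k : ℕ) : Measurable (dgt N k) := by
  apply Measurable.comp (f := fun t : ℝ => ⌊t * (N:ℝ)^(k+1)⌋)
    (g := fun z : ℤ => (z % (N:ℤ)).toNat)
  · exact measurable_of_countable _
  · exact Int.measurable_floor.comp (measurable_id.mul_const _)

end Digits

section Addr
variable {d N n : ℕ} {D : Fin N → (Fin d → ℝ)} {φ : Fin N → (Fin d → ℝ) → (Fin d → ℝ)}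
variable {M : Fin N → Fin d → ℕ} {E : Set (Fin d → ℝ)}

/-- Integer address of the cube corresponding to a word. -/
def fcAddr (n : ℕ) (M : Fin N → Fin d → ℕ) : List (Fin N) → Fin d → ℕ
  | [] => fun _ => 0
  | j :: w => fun i => M j i * n ^ w.length + fcAddr n M w i

lemma fcAddr_lt (hM : ∀ j i, M j i < n) : ∀ (w : List (Fin N)) (i : Fin d),
    fcAddr n M w i < n ^ w.length := by
  intro w
  induction w with
  | nil => intro i; simp [fcAddr]
  | cons j w ih =>
    intro i
    have h1 : M j i + 1 ≤ n := hM j i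
    calc fcAddr n M (j :: w) i = M j i * n ^ w.length + fcAddr n M w i := rfl
      _ < M j i * n ^ w.length + n ^ w.length := by
          exact Nat.add_lt_add_left (ih i) _
      _ = (M j i + 1) * n ^ w.length := by ring
      _ ≤ n * n ^ w.length := Nat.mul_le_mul_right _ h1
      _ = n ^ (j :: w).length := by rw [List.length_cons]; ring

lemma fcAddr_inj (hDinj : Function.Injective D) (hM : ∀ j i, M j i < n)
    (hMD : ∀ j i, D j i = M j i) : ∀ (w w' : List (Fin N)), w.length = w'.length →
    fcAddr n M w = fcAddr n M w' → w = w' := by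
  intro w
  induction w with
  | nil =>
    intro w' hl _
    exact (List.length_eq_zero_iff.1 hl.symm).symm
  | cons j w ih =>
    intro w' hl ha
    cases w' with
    | nil => simp at hl
    | cons j' w'' =>
      have hll : w.length = w''.length := by simpa using hl
      have key : ∀ i, M j i * n ^ w.length + fcAddr n M w i
          = M j' i * n ^ w.length + fcAddr n M w'' i := by
        intro i
        have := congrFun ha i
        simpa [fcAddr, hll] using this
      have hMeq : ∀ i, M j i = M j' i ∧ fcAddr n M w i = fcAddr n M w'' i := by
        intro i
        have h1 := fcAddr_lt hM w i
        have h2 := fcAddr_lt hM w'' i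
        rw [← hll] at h2
        have hk := key i
        constructor
        · have e1 : (M j i * n ^ w.length + fcAddr n M w i) / n ^ w.length = M j i := by
            rw [Nat.mul_comm, Nat.mul_add_div (Nat.pos_of_ne_zero (by
              intro h; rw [h] at h1; omega)), Nat.div_eq_of_lt h1]
            omega
          have e2 : (M j' i * n ^ w.length + fcAddr n M w'' i) / n ^ w.length = M j' i := by
            rw [Nat.mul_comm, Nat.mul_add_div (Nat.pos_of_ne_zero (by
              intro h; rw [h] at h2; omega)), Nat.div_eq_of_lt h2]
            omega
          rw [← e1, ← e2, hk]
        · have e1 : (M j i * n ^ w.length + fcAddr n M w i) % n ^ w.length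
              = fcAddr n M w i := by
            rw [Nat.mul_comm, Nat.mul_add_mod, Nat.mod_eq_of_lt h1]
          have e2 : (M j' i * n ^ w.length + fcAddr n M w'' i) % n ^ w.length
              = fcAddr n M w'' i := by
            rw [Nat.mul_comm, Nat.mul_add_mod, Nat.mod_eq_of_lt h2]
          rw [← e1, ← e2, hk]
      have hj : j = j' := by
        apply hDinj
        funext i
        rw [hMD j i, hMD j' i]
        exact_mod_cast (hMeq i).1
      have hw : w = w'' := by
        apply ih w'' hll
        funext i
        exact (hMeq i).2
      rw [hj, hw]

lemma fcPhi_coord (hn : 2 ≤ n) (hφ : ∀ j x, φ j x = (n : ℝ)⁻¹ • (x + D j))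
    (hMD : ∀ j i, D j i = M j i) (w : List (Fin N)) (x : Fin d → ℝ) (i : Fin d) :
    fcPhi φ w x i = (x i + fcAddr n M w i) / (n:ℝ) ^ w.length := by
  have hn0 : (0:ℝ) < (n:ℝ) := by positivity
  induction w with
  | nil => simp [fcPhi, fcAddr]
  | cons j w ih =>
    have : fcPhi φ (j :: w) x i = (n:ℝ)⁻¹ * (fcPhi φ w x i + D j i) := by
      rw [fcPhi_cons, Function.comp_apply, hφ]
      simp [Pi.smul_apply, Pi.add_apply]
    rw [this, ih, hMD]
    have : (fcAddr n M (j :: w) i : ℝ) = (M j i : ℝ) * (n:ℝ) ^ w.length + fcAddr n M w i := by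
      show ((M j i * n ^ w.length + fcAddr n M w i : ℕ) : ℝ) = _
      push_cast
      ring
    rw [this, List.length_cons]
    have hpow : (0:ℝ) < (n:ℝ) ^ w.length := by positivity
    field_simp
    ring

lemma E_subset_cube (hn : 2 ≤ n) (hφ : ∀ j x, φ j x = (n : ℝ)⁻¹ • (x + D j))
    (hEne : E.Nonempty) (hEc : IsCompact E) (hE : E = ⋃ j, φ j '' E)
    (hM : ∀ j i, M j i < n) (hMD : ∀ j i, D j i = M j i) :
    ∀ x ∈ E, ∀ i, x i ∈ Icc (0:ℝ) 1 := by
  have hn0 : (0:ℝ) < (n:ℝ) := by positivity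
  have hn1 : (1:ℝ) < (n:ℝ) := by exact_mod_cast hn.trans_lt' one_lt_two
  intro x hx i
  have hcont : ContinuousOn (fun y : Fin d → ℝ => y i) E := (continuous_apply i).continuousOn
  have decomp : ∀ a ∈ E, ∃ j, ∃ b ∈ E, a i * n = b i + D j i := by
    intro a haE
    have := hE ▸ haE
    obtain ⟨j, b, hb, hba⟩ := mem_iUnion.1 this
    refine ⟨j, b, hb, ?_⟩
    rw [← hba, hφ]
    simp only [Pi.smul_apply, Pi.add_apply, smul_eq_mul]
    field_simp
  constructor
  · obtain ⟨a, haE, hamin⟩ := hEc.exists_isMinOn hEne hcont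
    obtain ⟨j, b, hbE, hab⟩ := decomp a haE
    have hDji : (0:ℝ) ≤ D j i := by rw [hMD]; positivity
    have hba : a i ≤ b i := hamin hbE
    have ha0 : 0 ≤ a i := by
      by_contra hneg
      push_neg at hneg
      have h2 : a i * n < a i * 1 := by
        apply mul_lt_mul_of_neg_left hn1 hneg
      rw [mul_one] at h2
      linarith
    exact ha0.trans (hamin hx)
  · obtain ⟨a, haE, hamax⟩ := hEc.exists_isMaxOn hEne hcont
    obtain ⟨j, b, hbE, hab⟩ := decomp a haE
    have hDji : D j i ≤ (n:ℝ) - 1 := by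
      rw [hMD]
      have : (M j i : ℝ) ≤ (n:ℝ) - 1 := by
        have := hM j i
        have : (M j i : ℝ) + 1 ≤ (n:ℝ) := by exact_mod_cast this
        linarith
      linarith
    have hba : b i ≤ a i := hamax hbE
    have ha1 : a i ≤ 1 := by
      by_contra hgt
      push_neg at hgt
      have h2 : ((n:ℝ) - 1) * 1 < ((n:ℝ) - 1) * a i :=
        mul_lt_mul_of_pos_left hgt (by linarith)
      nlinarith
    exact (hamax hx).trans ha1

end Addr

section Frostman
variable {X : Type*} [MetricSpace X] [MeasurableSpace X] [BorelSpace X]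

lemma frostman_singleton_zero (μ : Measure X) {s C : ℝ} (hs : 0 < s)
    (hball : ∀ (x : X) (r : ℝ), 0 < r →
      μ (closedBall x r) ≤ ENNReal.ofReal C * ENNReal.ofReal (r ^ s)) (p : X) :
    μ {p} = 0 := by
  have hb : ∀ m : ℕ, μ {p} ≤ ENNReal.ofReal C * ENNReal.ofReal ((1/((m:ℝ)+1)) ^ s) := by
    intro m
    have hpos : (0:ℝ) < 1/((m:ℝ)+1) := by positivity
    refine le_trans (measure_mono ?_) (hball p _ hpos)
    intro q hq
    rw [mem_singleton_iff] at hq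
    subst hq
    exact mem_closedBall_self hpos.le
  have htend : Filter.Tendsto
      (fun m : ℕ => ENNReal.ofReal C * ENNReal.ofReal ((1/((m:ℝ)+1)) ^ s))
      Filter.atTop (nhds 0) := by
    have h1 : Filter.Tendsto (fun m : ℕ => 1/((m:ℝ)+1)) Filter.atTop (nhds 0) :=
      tendsto_one_div_add_atTop_nhds_zero_nat
    have h2 : Filter.Tendsto (fun m : ℕ => (1/((m:ℝ)+1)) ^ s) Filter.atTop (nhds 0) := by
      have hc : ContinuousAt (fun y : ℝ => y ^ s) 0 :=
        Real.continuousAt_rpow_const 0 s (Or.inr hs.le)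
      have := hc.tendsto.comp h1
      rwa [Real.zero_rpow hs.ne'] at this
    have h3 : Filter.Tendsto (fun m : ℕ => ENNReal.ofReal ((1/((m:ℝ)+1)) ^ s))
        Filter.atTop (nhds 0) := by
      rw [show (0:ℝ≥0∞) = ENNReal.ofReal 0 by simp]
      exact ENNReal.tendsto_ofReal h2
    have := ENNReal.Tendsto.const_mul (a := ENNReal.ofReal C) h3 (Or.inr ENNReal.ofReal_ne_top)
    simpa using this
  have : μ {p} ≤ 0 := ge_of_tendsto' htend hb
  exact le_antisymm this zero_le

lemma frostman_dimH_le {μ : Measure X} {s C : ℝ} (hs : 0 < s) (hC : 0 < C)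
    (hball : ∀ (x : X) (r : ℝ), 0 < r →
      μ (closedBall x r) ≤ ENNReal.ofReal C * ENNReal.ofReal (r ^ s))
    {A : Set X} (hA : 1 ≤ μ A) :
    ENNReal.ofReal s ≤ dimH A := by
  have hC0 : ENNReal.ofReal C ≠ 0 := by simp [hC]
  have hCt : ENNReal.ofReal C ≠ ⊤ := ENNReal.ofReal_ne_top
  -- key: Hausdorff measure is bounded below
  have hmain : (ENNReal.ofReal C)⁻¹ ≤ μH[s] A := by
    rw [MeasureTheory.Measure.hausdorffMeasure_apply]
    refine le_iSup₂_of_le 1 one_pos ?_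
    refine le_iInf fun t => le_iInf fun hcov => le_iInf fun _ => ?_
    have hterm : ∀ m : ℕ, μ (t m) ≤
        ENNReal.ofReal C * ⨆ _ : (t m).Nonempty, EMetric.diam (t m) ^ s := by
      intro m
      rcases Set.eq_empty_or_nonempty (t m) with he | ⟨p, hp⟩
      · rw [he]; simp
      have hne : (t m).Nonempty := ⟨p, hp⟩
      rw [iSup_pos hne]
      rcases eq_or_ne (EMetric.diam (t m)) ⊤ with hdiam | hdiam
      · rw [hdiam, ENNReal.top_rpow_of_pos hs, ENNReal.mul_top hC0]
        exact le_top
      have hbdd : Bornology.IsBounded (t m) :=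
        Metric.isBounded_iff_ediam_ne_top.2 hdiam
      set r : ℝ := (EMetric.diam (t m)).toReal with hr
      rcases eq_or_lt_of_le (show (0:ℝ) ≤ r from ENNReal.toReal_nonneg) with hr0 | hr0
      · -- diameter zero: subsingleton
        have hd0 : EMetric.diam (t m) = 0 := by
          rw [← ENNReal.ofReal_toReal hdiam, ← hr, ← hr0]
          simp
        have hsub : t m ⊆ {p} := by
          intro q hq
          have := EMetric.diam_eq_zero_iff.1 hd0
          exact mem_singleton_iff.2 (this hq hp)
        calc μ (t m) ≤ μ {p} := measure_mono hsub
          _ = 0 := frostman_singleton_zero μ hs hball p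
          _ ≤ _ := zero_le
      · have hsubball : t m ⊆ closedBall p r := by
          intro q hq
          rw [mem_closedBall]
          exact Metric.dist_le_diam_of_mem hbdd hq hp
        calc μ (t m) ≤ μ (closedBall p r) := measure_mono hsubball
          _ ≤ ENNReal.ofReal C * ENNReal.ofReal (r ^ s) := hball p r hr0
          _ = ENNReal.ofReal C * EMetric.diam (t m) ^ s := by
              rw [← ENNReal.ofReal_rpow_of_nonneg ENNReal.toReal_nonneg hs.le,
                ENNReal.ofReal_toReal hdiam]
    have hsum : (1:ℝ≥0∞) ≤ ENNReal.ofReal C *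
        ∑' m, ⨆ _ : (t m).Nonempty, EMetric.diam (t m) ^ s := by
      calc (1:ℝ≥0∞) ≤ μ A := hA
        _ ≤ μ (⋃ m, t m) := measure_mono hcov
        _ ≤ ∑' m, μ (t m) := measure_iUnion_le t
        _ ≤ ∑' m, ENNReal.ofReal C * ⨆ _ : (t m).Nonempty, EMetric.diam (t m) ^ s :=
            ENNReal.tsum_le_tsum hterm
        _ = _ := ENNReal.tsum_mul_left
    calc (ENNReal.ofReal C)⁻¹ = (ENNReal.ofReal C)⁻¹ * 1 := (mul_one _).symm
      _ ≤ (ENNReal.ofReal C)⁻¹ * (ENNReal.ofReal C *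
          ∑' m, ⨆ _ : (t m).Nonempty, EMetric.diam (t m) ^ s) :=
          mul_le_mul_right hsum _
      _ = ∑' m, ⨆ _ : (t m).Nonempty, EMetric.diam (t m) ^ s := by
          rw [← mul_assoc, ENNReal.inv_mul_cancel hC0 hCt, one_mul]
  have hne0 : μH[s] A ≠ 0 := by
    intro h0
    rw [h0] at hmain
    exact (ENNReal.inv_ne_zero.2 hCt) (le_antisymm hmain zero_le)
  have : μH[((s.toNNReal : ℝ≥0) : ℝ)] A ≠ 0 := by
    rwa [Real.coe_toNNReal s hs.le]
  have hle := le_dimH_of_hausdorffMeasure_ne_zero this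
  rwa [show ENNReal.ofReal s = ((s.toNNReal : ℝ≥0) : ℝ≥0∞) from rfl]

end Frostman

section Lower
variable {d N n : ℕ} {D : Fin N → (Fin d → ℝ)} {φ : Fin N → (Fin d → ℝ) → (Fin d → ℝ)}
variable {M : Fin N → Fin d → ℕ} {E : Set (Fin d → ℝ)}

lemma fcPhi_mem_attr (hE : E = ⋃ j, φ j '' E) :
    ∀ (w : List (Fin N)), ∀ y ∈ E, fcPhi φ w y ∈ E := by
  intro w
  induction w with
  | nil => intro y hy; simpa using hy
  | cons j w ih =>
    intro y hy
    have h1 : fcPhi φ w y ∈ E := ih y hy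
    have h2 : φ j (fcPhi φ w y) ∈ ⋃ j, φ j '' E :=
      mem_iUnion.2 ⟨j, ⟨fcPhi φ w y, h1, rfl⟩⟩
    rw [fcPhi_cons, Function.comp_apply, hE]
    exact h2

lemma dimH_fractal_lower (hn : 2 ≤ n) (hDinj : Function.Injective D)
    (hMlt : ∀ j i, M j i < n) (hMD : ∀ j i, D j i = M j i)
    (hφ : ∀ j x, φ j x = (n : ℝ)⁻¹ • (x + D j))
    (hEne : E.Nonempty) (hEc : IsCompact E) (hE : E = ⋃ j, φ j '' E) (hN : 0 < N) :
    ENNReal.ofReal (Real.log N / Real.log n) ≤ dimH E := by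
  classical
  rcases eq_or_lt_of_le (show 1 ≤ N from hN) with hN1 | hN2
  · rw [← hN1]
    simp
  have hN2 : 2 ≤ N := hN2
  have hn1 : (1:ℝ) < (n:ℝ) := by exact_mod_cast hn.trans_lt' one_lt_two
  have hn0 : (0:ℝ) < (n:ℝ) := by positivity
  have hlogn : 0 < Real.log n := Real.log_pos hn1
  set s : ℝ := Real.log N / Real.log n with hs
  have hs0 : 0 < s := div_pos (Real.log_pos (by exact_mod_cast hN2)) hlogn
  have hns : (n:ℝ) ^ s = (N:ℝ) := by
    rw [Real.rpow_def_of_pos hn0, hs, mul_div_cancel₀ _ hlogn.ne',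
      Real.exp_log (by positivity : (0:ℝ) < (N:ℝ))]
  obtain ⟨x₀, hx₀⟩ := hEne
  -- the digit functions
  set dig : ℕ → ℝ → Fin N := fun j t => ⟨dgt N j t % N, Nat.mod_lt _ hN⟩ with hdig
  have hdigval : ∀ j t, ((dig j t : Fin N) : ℕ) = dgt N j t :=
    fun j t => Nat.mod_eq_of_lt (dgt_lt hN j t)
  have hdigmeas : ∀ j, Measurable (dig j) :=
    fun j => (measurable_of_countable
      (fun v : ℕ => (⟨v % N, Nat.mod_lt _ hN⟩ : Fin N))).comp (dgt_measurable N j)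
  -- the approximations to the coding map
  set gk : ℕ → ℝ → (Fin d → ℝ) :=
    fun k t => fcPhi φ (List.ofFn fun i : Fin k => dig i t) x₀ with hgk
  have hφE : ∀ (j : Fin N), ∀ y ∈ E, φ j y ∈ E := by
    intro j y hy
    rw [hE]
    exact mem_iUnion.2 ⟨j, ⟨y, hy, rfl⟩⟩
  have hgkmeas : ∀ k, Measurable (gk k) := by
    intro k
    have : gk k = (fun w : Fin k → Fin N => fcPhi φ (List.ofFn w) x₀)
        ∘ (fun t => fun i : Fin k => dig i t) := rfl
    rw [this]
    exact (measurable_of_countable _).comp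
      (measurable_pi_lambda _ (fun i => hdigmeas i))
  have hcauchy : ∀ t, CauchySeq (fun k => gk k t) := by
    intro t
    apply cauchySeq_of_le_geometric ((n:ℝ)⁻¹) (diam E) (inv_lt_one_of_one_lt₀ hn1)
    intro k
    have hsucc : gk (k+1) t = fcPhi φ (List.ofFn fun i : Fin k => dig i t)
        (φ (dig k t) x₀) := by
      show fcPhi φ (List.ofFn fun i : Fin (k+1) => dig i t) x₀ = _
      rw [fcPhi_ofFn_succ φ (fun j => dig j t) k]
      rfl
    have hdd : dist (gk k t) (gk (k+1) t)
        = ((n:ℝ)⁻¹) ^ k * dist x₀ (φ (dig k t) x₀) := by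
      rw [hsucc]
      show dist (fcPhi φ (List.ofFn fun i : Fin k => dig i t) x₀) _ = _
      rw [dist_fcPhi hn hφ]
      simp
    rw [hdd, mul_comm]
    apply mul_le_mul_of_nonneg_right _ (by positivity)
    exact dist_le_diam_of_mem hEc.isBounded hx₀ (hφE _ _ hx₀)
  set g : ℝ → (Fin d → ℝ) := fun t => Filter.limUnder Filter.atTop (fun k => gk k t) with hg
  have htend : ∀ t, Filter.Tendsto (fun k => gk k t) Filter.atTop (nhds (g t)) :=
    fun t => (hcauchy t).tendsto_limUnder
  have hgmeas : Measurable g := by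
    apply measurable_of_tendsto_metrizable hgkmeas
    rw [tendsto_pi_nhds]
    exact htend
  have hgmem : ∀ t k, g t ∈ fcPhi φ (List.ofFn fun i : Fin k => dig i t) '' E := by
    intro t k
    have hclosed : IsClosed (fcPhi φ (List.ofFn fun i : Fin k => dig i t) '' E) :=
      (hEc.image (lipschitz_fcPhi hn hφ _).continuous).isClosed
    apply hclosed.mem_of_tendsto (htend t)
    filter_upwards [Filter.eventually_ge_atTop k] with j hj
    obtain ⟨l, rfl⟩ := Nat.exists_eq_add_of_le hj
    have hsplitd : (List.ofFn fun i : Fin (k+l) => dig i t)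
        = (List.ofFn fun i : Fin k => dig i t) ++ (List.ofFn fun i : Fin l => dig (k+i) t) := by
      rw [List.ofFn_add]
      congr 1
    show fcPhi φ (List.ofFn fun i : Fin (k+l) => dig i t) x₀ ∈ _
    rw [hsplitd, fcPhi_append, Function.comp_apply]
    exact ⟨_, fcPhi_mem_attr hE _ x₀ hx₀, rfl⟩
  have hgE : ∀ t, g t ∈ E := by
    intro t
    have := hgmem t 0
    simpa using this
  -- the measure
  set μ : Measure (Fin d → ℝ) :=
    Measure.map g (MeasureTheory.volume.restrict (Ico (0:ℝ) 1)) with hμ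
  have hμapp : ∀ A : Set (Fin d → ℝ), MeasurableSet A →
      μ A = MeasureTheory.volume (g ⁻¹' A ∩ Ico (0:ℝ) 1) := by
    intro A hA
    rw [hμ, Measure.map_apply hgmeas hA, Measure.restrict_apply (hgmeas hA)]
  have hμE : 1 ≤ μ E := by
    rw [hμapp E hEc.measurableSet]
    have : g ⁻¹' E ∩ Ico (0:ℝ) 1 = Ico (0:ℝ) 1 := by
      apply inter_eq_right.2
      intro t _
      exact hgE t
    rw [this, Real.volume_Ico]
    simp
  -- Frostman bound
  have hball : ∀ (x : Fin d → ℝ) (r : ℝ), 0 < r →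
      μ (closedBall x r) ≤ ENNReal.ofReal ((4:ℝ)^d * N) * ENNReal.ofReal (r ^ s) := by
    intro x r hr
    by_cases hr1 : 1 ≤ r
    · have h1 : μ (closedBall x r) ≤ 1 := by
        rw [hμapp _ measurableSet_closedBall]
        calc MeasureTheory.volume (g ⁻¹' closedBall x r ∩ Ico (0:ℝ) 1)
            ≤ MeasureTheory.volume (Ico (0:ℝ) 1) :=
              MeasureTheory.measure_mono inter_subset_right
          _ = 1 := by rw [Real.volume_Ico]; simp
      refine h1.trans ?_
      have hc1 : (1:ℝ≥0∞) ≤ ENNReal.ofReal ((4:ℝ)^d * N) := by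
        rw [ENNReal.one_le_ofReal]
        have h4 : (1:ℝ) ≤ (4:ℝ)^d := one_le_pow₀ (by norm_num)
        have hN1 : (1:ℝ) ≤ (N:ℝ) := by exact_mod_cast hN
        nlinarith
      have hc2 : (1:ℝ≥0∞) ≤ ENNReal.ofReal (r ^ s) := by
        rw [ENNReal.one_le_ofReal]
        exact Real.one_le_rpow hr1 hs0.le
      calc (1:ℝ≥0∞) = 1 * 1 := (one_mul 1).symm
        _ ≤ _ := mul_le_mul' hc1 hc2
    · push_neg at hr1
      -- choose the scale k
      have hex : ∃ k : ℕ, ((n:ℝ)⁻¹) ^ (k+1) < r := by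
        obtain ⟨m, hm⟩ := exists_pow_lt_of_lt_one hr (inv_lt_one_of_one_lt₀ hn1)
        exact ⟨m, lt_of_le_of_lt (pow_le_pow_of_le_one (by positivity)
          (inv_le_one_of_one_le₀ hn1.le) (Nat.le_succ m)) hm⟩
      set k : ℕ := Nat.find hex with hk
      have hklt : ((n:ℝ)⁻¹) ^ (k+1) < r := Nat.find_spec hex
      have hkge : r ≤ ((n:ℝ)⁻¹) ^ k := by
        rcases Nat.eq_zero_or_pos k with hk0 | hk0
        · rw [hk0, pow_zero]; exact hr1.le
        · have := Nat.find_min hex (m := k - 1) (by omega)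
          push_neg at this
          have hk1 : k - 1 + 1 = k := by omega
          rwa [hk1] at this
      have hnk0 : (0:ℝ) < (n:ℝ)^k := by positivity
      -- the words whose cubes meet the ball
      set W : Finset (Fin k → Fin N) := Finset.univ.filter
        (fun w => ((fcPhi φ (List.ofFn w) '' E) ∩ closedBall x r).Nonempty) with hW
      have hcover : g ⁻¹' closedBall x r ∩ Ico (0:ℝ) 1 ⊆
          ⋃ w ∈ W, cylSet N k (fun i => if h : i < k then ((w ⟨i, h⟩ : Fin N) : ℕ) else 0) := by
        rintro t ⟨htb, htI⟩
        have hmemw : (fun i : Fin k => dig i t) ∈ W := by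
          rw [hW, Finset.mem_filter]
          exact ⟨Finset.mem_univ _, ⟨g t, hgmem t k, htb⟩⟩
        apply Set.mem_biUnion hmemw
        refine ⟨htI, ?_⟩
        intro i hi
        simp only [dif_pos hi]
        exact (hdigval i t).symm
      have hvol : μ (closedBall x r) ≤ (W.card : ℝ≥0∞) * ENNReal.ofReal (((N:ℝ)^k)⁻¹) := by
        rw [hμapp _ measurableSet_closedBall]
        calc MeasureTheory.volume (g ⁻¹' closedBall x r ∩ Ico (0:ℝ) 1)
            ≤ MeasureTheory.volume (⋃ w ∈ W,
              cylSet N k (fun i => if h : i < k then ((w ⟨i, h⟩ : Fin N) : ℕ) else 0)) :=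
              MeasureTheory.measure_mono hcover
          _ ≤ ∑ w ∈ W, MeasureTheory.volume
              (cylSet N k (fun i => if h : i < k then ((w ⟨i, h⟩ : Fin N) : ℕ) else 0)) :=
              MeasureTheory.measure_biUnion_finset_le _ _
          _ ≤ ∑ _w ∈ W, ENNReal.ofReal (((N:ℝ)^k)⁻¹) :=
              Finset.sum_le_sum (fun w _ => cylSet_volume hN k _)
          _ = (W.card : ℝ≥0∞) * ENNReal.ofReal (((N:ℝ)^k)⁻¹) := by
              rw [Finset.sum_const, nsmul_eq_mul]
      -- counting the words
      set lowF : Fin d → ℤ := fun i => ⌈(n:ℝ)^k * (x i - r)⌉ - 1 with hlowF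
      set highF : Fin d → ℤ := fun i => ⌊(n:ℝ)^k * (x i + r)⌋ with hhighF
      have hmaps : ∀ w ∈ W, (fun i => (fcAddr n M (List.ofFn w) i : ℤ))
          ∈ Fintype.piFinset (fun i => Finset.Icc (lowF i) (highF i)) := by
        intro w hw
        rw [hW, Finset.mem_filter] at hw
        obtain ⟨-, p, ⟨e, heE, hep⟩, hpball⟩ := hw
        rw [Fintype.mem_piFinset]
        intro i
        have hpi : p i = (e i + fcAddr n M (List.ofFn w) i) / (n:ℝ)^k := by
          rw [← hep, fcPhi_coord hn hφ hMD, List.length_ofFn]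
        have hei := E_subset_cube hn hφ ⟨x₀, hx₀⟩ hEc hE hMlt hMD e heE i
        have hdistc : |p i - x i| ≤ r := by
          have h1 : dist (p i) (x i) ≤ dist p x := dist_le_pi_dist p x i
          have h2 : dist p x ≤ r := mem_closedBall.1 hpball
          rw [Real.dist_eq] at h1
          linarith
        obtain ⟨hab1, hab2⟩ := abs_le.1 hdistc
        have hA : (fcAddr n M (List.ofFn w) i : ℝ) = (n:ℝ)^k * p i - e i := by
          rw [hpi]
          field_simp
          ring
        rw [Finset.mem_Icc]
        constructor
        · have hr1 : (n:ℝ)^k * (x i - r) ≤ (n:ℝ)^k * p i :=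
            mul_le_mul_of_nonneg_left (by linarith) hnk0.le
          have hup : (n:ℝ)^k * (x i - r) ≤ (fcAddr n M (List.ofFn w) i : ℝ) + 1 := by
            rw [hA]
            have := hei.2
            linarith
          have hceil : ⌈(n:ℝ)^k * (x i - r)⌉ ≤ (fcAddr n M (List.ofFn w) i : ℤ) + 1 := by
            apply Int.ceil_le.2
            push_cast
            exact hup
          simp only [hlowF]
          omega
        · have hr1 : (n:ℝ)^k * p i ≤ (n:ℝ)^k * (x i + r) :=
            mul_le_mul_of_nonneg_left (by linarith) hnk0.le
          apply Int.le_floor.2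
          push_cast
          rw [hA]
          have := hei.1
          linarith
      have hinjW : Set.InjOn (fun w : Fin k → Fin N =>
          (fun i => (fcAddr n M (List.ofFn w) i : ℤ))) W := by
        intro w1 _ w2 _ heq
        apply List.ofFn_inj.1
        apply fcAddr_inj hDinj hMlt hMD _ _ (by simp)
        funext i
        have h2 : (fcAddr n M (List.ofFn w1) i : ℤ) = fcAddr n M (List.ofFn w2) i :=
          congrFun heq i
        exact_mod_cast h2
      have hcard : W.card ≤ 4^d := by
        have hcardle := Finset.card_le_card_of_injOn _ hmaps hinjW
        have hTcard : (Fintype.piFinset (fun i => Finset.Icc (lowF i) (highF i))).card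
            ≤ 4^d := by
          rw [Fintype.card_piFinset]
          have hIcc : ∀ i, (Finset.Icc (lowF i) (highF i)).card ≤ 4 := by
            intro i
            rw [Int.card_Icc]
            have h3 : (n:ℝ)^k * r ≤ 1 := by
              have hr2 : r ≤ ((n:ℝ)^k)⁻¹ := by rwa [← inv_pow]
              calc (n:ℝ)^k * r ≤ (n:ℝ)^k * ((n:ℝ)^k)⁻¹ :=
                    mul_le_mul_of_nonneg_left hr2 hnk0.le
                _ = 1 := mul_inv_cancel₀ hnk0.ne'
            have h1 : ((highF i) : ℝ) ≤ (n:ℝ)^k * (x i + r) := Int.floor_le _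
            have h2 : ((n:ℝ)^k * (x i - r)) - 1 ≤ ((lowF i):ℝ) := by
              have := Int.le_ceil ((n:ℝ)^k * (x i - r))
              simp only [hlowF]
              push_cast
              linarith
            have hreal : ((highF i) : ℝ) + 1 - (lowF i) ≤ 4 := by
              have e1 : (n:ℝ)^k * (x i + r) = (n:ℝ)^k * x i + (n:ℝ)^k * r := by ring
              have e2 : (n:ℝ)^k * (x i - r) = (n:ℝ)^k * x i - (n:ℝ)^k * r := by ring
              linarith
            have hint : (highF i) + 1 - (lowF i) ≤ 4 := by exact_mod_cast hreal
            omega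
          calc ∏ i, (Finset.Icc (lowF i) (highF i)).card ≤ ∏ _i : Fin d, 4 :=
                Finset.prod_le_prod' (fun i _ => hIcc i)
            _ = 4^d := by rw [Finset.prod_const, Finset.card_univ, Fintype.card_fin]
        exact hcardle.trans hTcard
      -- arithmetic: (N^k)⁻¹ ≤ N * r^s
      have hNk : ((N:ℝ)^k)⁻¹ ≤ (N:ℝ) * r ^ s := by
        have hpow1 : (((n:ℝ)^k)⁻¹) ^ s = ((N:ℝ)^k)⁻¹ := by
          rw [Real.inv_rpow (by positivity)]
          congr 1
          rw [← Real.rpow_natCast ((n:ℝ)) k, ← Real.rpow_mul hn0.le, mul_comm,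
            Real.rpow_mul hn0.le, Real.rpow_natCast, hns]
        have hc : (n:ℝ) * (n:ℝ)⁻¹ = 1 := mul_inv_cancel₀ hn0.ne'
        have hle : ((n:ℝ)^k)⁻¹ ≤ (n:ℝ) * r := by
          rw [← inv_pow]
          have heq : ((n:ℝ)⁻¹)^k = (n:ℝ) * ((n:ℝ)⁻¹)^(k+1) := by
            rw [pow_succ, show (n:ℝ) * (((n:ℝ)⁻¹)^k * (n:ℝ)⁻¹)
              = ((n:ℝ)*(n:ℝ)⁻¹) * ((n:ℝ)⁻¹)^k from by ring, hc, one_mul]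
          rw [heq]
          exact (mul_le_mul_of_nonneg_left hklt.le hn0.le)
        calc ((N:ℝ)^k)⁻¹ = (((n:ℝ)^k)⁻¹) ^ s := hpow1.symm
          _ ≤ ((n:ℝ) * r) ^ s := Real.rpow_le_rpow (by positivity) hle hs0.le
          _ = (n:ℝ)^s * r^s := Real.mul_rpow hn0.le hr.le
          _ = (N:ℝ) * r^s := by rw [hns]
      calc μ (closedBall x r) ≤ (W.card : ℝ≥0∞) * ENNReal.ofReal (((N:ℝ)^k)⁻¹) := hvol
        _ ≤ ((4^d : ℕ) : ℝ≥0∞) * ENNReal.ofReal (((N:ℝ)^k)⁻¹) :=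
            mul_le_mul_left (by exact_mod_cast hcard) _
        _ ≤ ((4^d : ℕ) : ℝ≥0∞) * ENNReal.ofReal ((N:ℝ) * r^s) :=
            mul_le_mul_right (ENNReal.ofReal_le_ofReal hNk) _
        _ = ENNReal.ofReal ((4:ℝ)^d * N) * ENNReal.ofReal (r ^ s) := by
            rw [← ENNReal.ofReal_natCast (4^d), ← ENNReal.ofReal_mul (by positivity),
              ← ENNReal.ofReal_mul (by positivity)]
            congr 1
            push_cast
            ring
  -- conclude via the mass distribution principle
  exact frostman_dimH_le hs0 (by positivity) hball hμE

end Lower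

open Metric MeasureTheory

/-- The unit cube `[0,1]^d`. -/
def unitCube (d : ℕ) : Set (Fin d → ℝ) := {x | ∀ j, x j ∈ Icc (0:ℝ) 1}

theorem dimension_drop_outside_island_points
    (d n N : ℕ) (hn : 2 ≤ n)
    (D : Fin N → (Fin d → ℝ)) (hDinj : Function.Injective D)
    (hD : ∀ j i, ∃ m : ℕ, m < n ∧ D j i = (m : ℝ))
    (φ : Fin N → (Fin d → ℝ) → (Fin d → ℝ))
    (hφ : ∀ j x, φ j x = (n : ℝ)⁻¹ • (x + D j))
    (E : Set (Fin d → ℝ)) (hEne : E.Nonempty) (hEc : IsCompact E)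
    (hE : E = ⋃ j, φ j '' E)
    -- `U = ⋃_{j ∈ J} φ_j([0,1]^d)` is an island of the first approximation `E₁`
    (J : Finset (Fin N)) (U : Set (Fin d → ℝ))
    (hU : U = ⋃ j ∈ J, φ j '' unitCube d)
    (hUcomp : ∃ x ∈ (⋃ j, φ j '' unitCube d),
      U = connectedComponentIn (⋃ j, φ j '' unitCube d) x)
    (hUisland : U ∩ frontier (unitCube d) = ∅)
    -- `P` is the set of points with a coding in which letters of `J` occur infinitely often
    (P : Set (Fin d → ℝ))
    (hP : P = {x ∈ E | ∃ σ : ℕ → Fin N,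
      (⋂ k : ℕ, ((List.ofFn (fun i : Fin k => σ i)).foldr
          (fun j f => φ j ∘ f) id) '' E) = {x} ∧
      ∀ m : ℕ, ∃ k ≥ m, σ k ∈ J})
    -- `E'` is the fractal cube with digit set `𝒟' = 𝒟 \ {d_j : j ∈ J}`
    (E' : Set (Fin d → ℝ)) (hE'ne : E'.Nonempty) (hE'c : IsCompact E')
    (hE' : E' = ⋃ j ∈ Jᶜ, φ j '' E') :
    E \ P ⊆ (⋃ σ : List (Fin N), (σ.foldr (fun j f => φ j ∘ f) id) '' E') ∧
    dimH (E \ P) ≤ ENNReal.ofReal (Real.log (N - J.card) / Real.log n) ∧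
    ENNReal.ofReal (Real.log (N - J.card) / Real.log n) < dimH E := by
  classical
  choose M hMlt hMD using hD
  -- basic cardinality facts
  have hN : 0 < N := by
    obtain ⟨x, hx⟩ := hEne
    rw [hE] at hx
    obtain ⟨j, -⟩ := Set.mem_iUnion.1 hx
    exact j.pos
  have hJne : J.Nonempty := by
    obtain ⟨y, hyE1, hUeq⟩ := hUcomp
    have hyU : y ∈ U := by
      rw [hUeq]
      exact mem_connectedComponentIn hyE1
    rw [hU] at hyU
    obtain ⟨j, hj, -⟩ := Set.mem_iUnion₂.1 hyU
    exact ⟨j, hj⟩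
  have hJcne : Jᶜ.Nonempty := by
    obtain ⟨x, hx⟩ := hE'ne
    rw [hE'] at hx
    obtain ⟨j, hj, -⟩ := Set.mem_iUnion₂.1 hx
    exact ⟨j, hj⟩
  have hJcard : J.card ≤ N := by
    simpa using Finset.card_le_univ J
  have hJcompl : Jᶜ.card = N - J.card := by
    rw [Finset.card_compl]
    simp
  have hJcpos : 0 < Jᶜ.card := Finset.card_pos.2 hJcne
  have hJpos : 0 < J.card := Finset.card_pos.2 hJne
  have hN2 : 2 ≤ N := by omega
  have hcast : ((N:ℝ) - (J.card:ℝ)) = ((Jᶜ.card : ℕ) : ℝ) := by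
    rw [hJcompl]
    push_cast [Nat.cast_sub hJcard]
    ring
  have hn1 : (1:ℝ) < (n:ℝ) := by exact_mod_cast hn.trans_lt' one_lt_two
  have hlogn : 0 < Real.log n := Real.log_pos hn1
  -- part (a)
  have hpart1 : E \ P ⊆ (⋃ σ : List (Fin N), (σ.foldr (fun j f => φ j ∘ f) id) '' E') :=
    part1 hn hφ hEc hE P hP hE'ne hE'c hE'
  refine ⟨hpart1, ?_, ?_⟩
  · -- part (b): dimension upper bound
    have h1 : dimH (E \ P) ≤ dimH (⋃ σ : List (Fin N), fcPhi φ σ '' E') :=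
      dimH_mono hpart1
    have h2 : dimH (⋃ σ : List (Fin N), fcPhi φ σ '' E') = ⨆ σ : List (Fin N),
        dimH (fcPhi φ σ '' E') := dimH_iUnion _
    have h3 : ∀ σ : List (Fin N), dimH (fcPhi φ σ '' E') ≤ dimH E' :=
      fun σ => (lipschitz_fcPhi hn hφ σ).dimH_image_le E'
    have h4 : dimH E' ≤ ENNReal.ofReal (Real.log (Jᶜ.card) / Real.log n) :=
      dimH_subattractor_le hn hφ hE'c hE' hJcpos
    calc dimH (E \ P) ≤ ⨆ σ : List (Fin N), dimH (fcPhi φ σ '' E') := h2 ▸ h1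
      _ ≤ dimH E' := iSup_le h3
      _ ≤ ENNReal.ofReal (Real.log (Jᶜ.card) / Real.log n) := h4
      _ = ENNReal.ofReal (Real.log ((N:ℝ) - J.card) / Real.log n) := by rw [hcast]
  · -- part (c): strict inequality
    have hlow : ENNReal.ofReal (Real.log N / Real.log n) ≤ dimH E :=
      dimH_fractal_lower hn hDinj hMlt hMD hφ hEne hEc hE hN
    have hNr1 : (1:ℝ) < (N:ℝ) := by exact_mod_cast hN2
    have hpos : (0:ℝ) < (N:ℝ) - J.card := by
      rw [hcast]
      exact_mod_cast hJcpos
    have hltN : (N:ℝ) - J.card < (N:ℝ) := by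
      have : (1:ℝ) ≤ (J.card : ℝ) := by exact_mod_cast hJpos
      linarith
    have hloglt : Real.log ((N:ℝ) - J.card) < Real.log N := Real.log_lt_log hpos hltN
    have hstrict : Real.log ((N:ℝ) - J.card) / Real.log n < Real.log N / Real.log n :=
      div_lt_div_of_pos_right hloglt hlogn
    calc ENNReal.ofReal (Real.log ((N:ℝ) - J.card) / Real.log n)
        < ENNReal.ofReal (Real.log N / Real.log n) := by
          rw [ENNReal.ofReal_lt_ofReal_iff (div_pos (Real.log_pos hNr1) hlogn)]
          exact hstrict
      _ ≤ dimH E := hlow
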